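/- Suppose the sequence {y_n} is bounded above and bounded below by positive constants, i.e. there exist m1, m2 > 0 with m1 ≤ y_n ≤ m2 for all n ∈ ℕ. Suppose I_C ≠ ∅, and that there exists a positive integer η such that for every sequence {c_m}_{m=1}^∞ with c_m ∈ I_β for all m, there exist positive integers N1 ≤ N2 ≤ η with Σ_{m=N1}^{N2} c_m ∈ I_B. Then there exist M > 0 and N ∈ ℕ such that x_n ≤ M for all n > N. -/

import Mathlib

open Finset

/-- The index set of the coefficient function `f` on `{1, …, k}`:
the set of indices `i ∈ {1, …, k}` with `f i > 0`. -/
noncomputable def indexSet (k : ℕ) (f : ℕ → ℝ) : Finset ℕ :=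
  (Finset.Icc 1 k).filter fun i => 0 < f i

/-- The iteration condition: for every sequence `c` (indexed by `1, 2, …`)
taking values in `S`, there exist positive integers `N1 ≤ N2 ≤ η` such that
`∑_{m=N1}^{N2} c m ∈ T`. -/
def iterCond (η : ℕ) (S T : Finset ℕ) : Prop :=
  ∀ c : ℕ → ℕ, (∀ m, 1 ≤ m → c m ∈ S) →
    ∃ N1 N2 : ℕ, 0 < N1 ∧ N1 ≤ N2 ∧ N2 ≤ η ∧ (∑ m ∈ Finset.Icc N1 N2, c m) ∈ T

/-- Path weight: product of `β c / den` along a path. -/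
noncomputable def valW (β : ℕ → ℝ) (den : ℕ → ℝ) : ℕ → List ℕ → ℝ
  | _, [] => 1
  | n, c :: w => (β c / den n) * valW β den (n - c) w

lemma valW_nil (β den : ℕ → ℝ) (n : ℕ) : valW β den n [] = 1 := rfl

lemma valW_cons (β den : ℕ → ℝ) (n c : ℕ) (w : List ℕ) :
    valW β den n (c :: w) = (β c / den n) * valW β den (n - c) w := rfl

lemma valW_append (β den : ℕ → ℝ) (u v : List ℕ) (n : ℕ) :
    valW β den n (u ++ v) = valW β den n u * valW β den (n - u.sum) v := by
  induction u generalizing n with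
  | nil => simp [valW]
  | cons c u ih => simp [valW_cons, ih, Nat.sub_sub, mul_assoc]

lemma valW_nonneg {β den : ℕ → ℝ} (hβ : ∀ i, 0 ≤ β i) (hden : ∀ n, 0 < den n)
    (n : ℕ) (w : List ℕ) : 0 ≤ valW β den n w := by
  induction w generalizing n with
  | nil => norm_num [valW_nil]
  | cons c w ih =>
    rw [valW_cons]
    exact mul_nonneg (div_nonneg (hβ c) (hden n).le) (ih _)

lemma valW_le {β den : ℕ → ℝ} {d b : ℝ} (hβ : ∀ i, 0 ≤ β i) (hd : 0 < d)
    (hden : ∀ n, d ≤ den n) {w : List ℕ} (hb : ∀ c ∈ w, β c ≤ b) (n : ℕ) :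
    valW β den n w ≤ (max (b / d) 1) ^ w.length := by
  induction w generalizing n with
  | nil => simp [valW_nil]
  | cons c w ih =>
    rw [valW_cons, List.length_cons, pow_succ, mul_comm ((max (b/d) 1) ^ w.length)]
    have h1 : β c / den n ≤ max (b / d) 1 := by
      refine le_trans ?_ (le_max_left (b/d) 1)
      exact div_le_div₀ (le_trans (hβ c) (hb c List.mem_cons_self))
        (hb c List.mem_cons_self) hd (hden n)
    have h2 := ih (fun c hc => hb c (List.mem_cons_of_mem _ hc)) (n - c)
    have h3 : (0:ℝ) ≤ valW β den (n - c) w :=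
      valW_nonneg hβ (fun m => lt_of_lt_of_le hd (hden m)) _ _
    exact mul_le_mul h1 h2 h3 (le_trans zero_le_one (le_max_right _ _))

lemma sum_Ico_getD (l : List ℕ) (a : ℕ) :
    ∑ m ∈ Finset.Ico a l.length, l.getD m 0 = (l.drop a).sum := by
  induction l generalizing a with
  | nil => simp
  | cons c l ih =>
    cases a with
    | zero =>
      rw [show Finset.Ico 0 (c :: l).length = Finset.range (c :: l).length by
        rw [Finset.range_eq_Ico], List.length_cons, Finset.sum_range_succ']
      simp only [List.getD_cons_succ, List.getD_cons_zero, List.drop_zero, List.sum_cons]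
      rw [Finset.range_eq_Ico, ih 0]
      simp [add_comm]
    | succ a =>
      have hmap : (Finset.Ico a l.length).map (addLeftEmbedding 1) =
          Finset.Ico (1 + a) (1 + l.length) := Finset.map_add_left_Ico a l.length 1
      rw [List.length_cons, show a + 1 = 1 + a by omega, show l.length + 1 = 1 + l.length by omega,
        ← hmap, Finset.sum_map]
      simp only [addLeftEmbedding_apply]
      simp only [show ∀ m : ℕ, 1 + m = m + 1 from fun m => by omega,
        List.getD_cons_succ, List.drop_succ_cons]
      exact ih a

lemma sum_Icc_shift (f : ℕ → ℕ) (N1 N2 : ℕ) (h : 1 ≤ N1) :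
    ∑ m ∈ Finset.Icc N1 N2, f m = ∑ m ∈ Finset.Ico (N1 - 1) N2, f (m + 1) := by
  have hmap : (Finset.Ico (N1 - 1) N2).map (addLeftEmbedding 1) =
      Finset.Ico (1 + (N1 - 1)) (1 + N2) := Finset.map_add_left_Ico _ _ 1
  have hset : Finset.Icc N1 N2 = Finset.Ico (1 + (N1 - 1)) (1 + N2) := by
    rw [← Finset.Ico_add_one_right_eq_Icc]
    congr 1 <;> omega
  rw [hset, ← hmap, Finset.sum_map]
  simp only [addLeftEmbedding_apply]
  exact Finset.sum_congr rfl fun m _ => by rw [show 1 + m = m + 1 by omega]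

theorem stmt_8
    (k : ℕ) (hk : 0 < k)
    (α A p q : ℝ) (β γ B C δ ε D E : ℕ → ℝ)
    (hα : 0 ≤ α) (hA : 0 ≤ A) (hp : 0 ≤ p) (hq : 0 ≤ q)
    (hβ : ∀ i, 0 ≤ β i) (hγ : ∀ i, 0 ≤ γ i) (hB : ∀ j, 0 ≤ B j) (hC : ∀ j, 0 ≤ C j)
    (hδ : ∀ i, 0 ≤ δ i) (hε : ∀ i, 0 ≤ ε i) (hD : ∀ j, 0 ≤ D j) (hE : ∀ j, 0 ≤ E j)
    (x y : ℕ → ℝ)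
    (hxnn : ∀ n, 0 ≤ x n) (hynn : ∀ n, 0 ≤ y n)
    (hxden : ∀ n, k ≤ n →
      0 < A + ∑ j ∈ Icc 1 k, B j * x (n - j) + ∑ j ∈ Icc 1 k, C j * y (n - j))
    (hyden : ∀ n, k ≤ n →
      0 < q + ∑ j ∈ Icc 1 k, D j * x (n - j) + ∑ j ∈ Icc 1 k, E j * y (n - j))
    (hxrec : ∀ n, k ≤ n → x n =
      (α + ∑ i ∈ Icc 1 k, β i * x (n - i) + ∑ i ∈ Icc 1 k, γ i * y (n - i)) /
      (A + ∑ j ∈ Icc 1 k, B j * x (n - j) + ∑ j ∈ Icc 1 k, C j * y (n - j)))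
    (hyrec : ∀ n, k ≤ n → y n =
      (p + ∑ i ∈ Icc 1 k, δ i * x (n - i) + ∑ i ∈ Icc 1 k, ε i * y (n - i)) /
      (q + ∑ j ∈ Icc 1 k, D j * x (n - j) + ∑ j ∈ Icc 1 k, E j * y (n - j)))
    (m1 m2 : ℝ) (hm1 : 0 < m1) (hm2 : 0 < m2)
    (hybd : ∀ n, m1 ≤ y n ∧ y n ≤ m2)
    (hCne : indexSet k C ≠ ∅)
    (hη : ∃ η : ℕ, 0 < η ∧ iterCond η (indexSet k β) (indexSet k B)) :
    ∃ M : ℝ, 0 < M ∧ ∃ N : ℕ, ∀ n, N < n → x n ≤ M := by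
  classical
  obtain ⟨η, hηpos, hIter⟩ := hη
  obtain ⟨j0, hj0⟩ := Finset.nonempty_iff_ne_empty.mpr hCne
  rw [indexSet, Finset.mem_filter, Finset.mem_Icc] at hj0
  obtain ⟨⟨hj01, hj0k⟩, hj0C⟩ := hj0
  obtain ⟨den, hden_eq⟩ : ∃ den : ℕ → ℝ, ∀ n, den n =
      A + ∑ j ∈ Icc 1 k, B j * x (n - j) + ∑ j ∈ Icc 1 k, C j * y (n - j) :=
    ⟨_, fun n => rfl⟩
  set d : ℝ := C j0 * m1 with hd_def
  have hd : 0 < d := mul_pos hj0C hm1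
  have hdenge : ∀ n, d ≤ den n := by
    intro n
    have h1 : C j0 * m1 ≤ C j0 * y (n - j0) :=
      mul_le_mul_of_nonneg_left (hybd (n - j0)).1 hj0C.le
    have h2 : C j0 * y (n - j0) ≤ ∑ j ∈ Icc 1 k, C j * y (n - j) :=
      Finset.single_le_sum (fun j _ => mul_nonneg (hC j) (hynn _))
        (Finset.mem_Icc.mpr ⟨hj01, hj0k⟩)
    have h3 : 0 ≤ ∑ j ∈ Icc 1 k, B j * x (n - j) :=
      Finset.sum_nonneg fun j _ => mul_nonneg (hB j) (hxnn _)
    rw [hden_eq]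
    linarith
  have hdenpos : ∀ n, 0 < den n := fun n => lt_of_lt_of_le hd (hdenge n)
  set Γ : ℝ := ∑ i ∈ Icc 1 k, γ i with hΓ_def
  have hΓ0 : 0 ≤ Γ := Finset.sum_nonneg fun i _ => hγ i
  set K : ℝ := (α + Γ * m2) / d with hK_def
  have hK0 : 0 ≤ K := div_nonneg (by positivity) hd.le
  -- The one-step expansion bound.
  have hstep : ∀ m : ℕ, k ≤ m → x m ≤ K + ∑ i ∈ Icc 1 k, (β i * x (m - i)) / den m := by
    intro m hm
    have hx := hxrec m hm
    have hnum : α + ∑ i ∈ Icc 1 k, β i * x (m - i) + ∑ i ∈ Icc 1 k, γ i * y (m - i)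
        ≤ (α + Γ * m2) + ∑ i ∈ Icc 1 k, β i * x (m - i) := by
      have h1 : ∑ i ∈ Icc 1 k, γ i * y (m - i) ≤ ∑ i ∈ Icc 1 k, γ i * m2 :=
        Finset.sum_le_sum fun i _ => mul_le_mul_of_nonneg_left (hybd _).2 (hγ i)
      have h2 : ∑ i ∈ Icc 1 k, γ i * m2 = Γ * m2 := by rw [hΓ_def, Finset.sum_mul]
      linarith
    have hβx0 : (0:ℝ) ≤ ∑ i ∈ Icc 1 k, β i * x (m - i) :=
      Finset.sum_nonneg fun i _ => mul_nonneg (hβ i) (hxnn _)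
    have hle : x m ≤ ((α + Γ * m2) + ∑ i ∈ Icc 1 k, β i * x (m - i)) / den m := by
      rw [hx, ← hden_eq m]
      exact (div_le_div_iff_of_pos_right (hdenpos m)).mpr hnum
    have hconst : (α + Γ * m2) / den m ≤ K := by
      rw [hK_def]
      exact div_le_div_of_nonneg_left (by positivity) hd (hdenge m)
    calc x m ≤ ((α + Γ * m2) + ∑ i ∈ Icc 1 k, β i * x (m - i)) / den m := hle
      _ = (α + Γ * m2) / den m + ∑ i ∈ Icc 1 k, (β i * x (m - i)) / den m := by
          rw [add_div, Finset.sum_div]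
      _ ≤ K + ∑ i ∈ Icc 1 k, (β i * x (m - i)) / den m := by linarith
  by_cases hIβ : indexSet k β = ∅
  · -- no β terms: one-step gives the bound directly
    refine ⟨K + 1, by linarith, k, ?_⟩
    intro n hn
    have hst := hstep n hn.le
    have hz : ∑ i ∈ Icc 1 k, (β i * x (n - i)) / den n = 0 := by
      refine Finset.sum_eq_zero fun i hi => ?_
      have : β i = 0 := by
        by_contra h
        have : i ∈ indexSet k β :=
          Finset.mem_filter.mpr ⟨hi, lt_of_le_of_ne (hβ i) (Ne.symm h)⟩
        simp [hIβ] at this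
      rw [this]; ring
    rw [hz] at hst
    linarith
  · obtain ⟨i0, hi0⟩ := Finset.nonempty_iff_ne_empty.mpr hIβ
    -- index set of B is nonempty
    have hBne : (indexSet k B).Nonempty := by
      obtain ⟨N1, N2, _, _, _, hmem⟩ := hIter (fun _ => i0) (fun _ _ => hi0)
      exact ⟨_, hmem⟩
    set Bmin : ℝ := (indexSet k B).inf' hBne B with hBmin_def
    have hBminpos : 0 < Bmin :=
      (Finset.lt_inf'_iff hBne).mpr fun j hj => (Finset.mem_filter.mp hj).2
    have hBminle : ∀ j ∈ indexSet k B, Bmin ≤ B j := fun j hj => Finset.inf'_le B hj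
    set b : ℝ := ∑ i ∈ Icc 1 k, β i with hb_def
    have hb0 : 0 ≤ b := Finset.sum_nonneg fun i _ => hβ i
    have hble : ∀ c ∈ Icc 1 k, β c ≤ b := fun c hc =>
      Finset.single_le_sum (fun i _ => hβ i) hc
    set W : ℝ := max (b / d) 1 with hW_def
    have hW1 : 1 ≤ W := le_max_right _ _
    set V : ℝ := W ^ η with hV_def
    have hV1 : 1 ≤ V := one_le_pow₀ hW1
    have hV0 : 0 ≤ V := by linarith
    set Q : ℝ := V * (b / Bmin) * V with hQ_def
    have hQ0 : 0 ≤ Q := by positivity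
    obtain ⟨Efn, hE0, hEs⟩ : ∃ Efn : ℕ → ℝ, Efn 0 = Q ∧
        ∀ t, Efn (t + 1) = V * K + (k : ℝ) * Efn t :=
      ⟨fun t => Nat.rec Q (fun _ ih => V * K + (k : ℝ) * ih) t, rfl, fun t => rfl⟩
    have hk1 : (1 : ℝ) ≤ (k : ℝ) := by exact_mod_cast hk
    have hEQ : ∀ t, Q ≤ Efn t := by
      intro t
      induction t with
      | zero => rw [hE0]
      | succ t ih =>
        rw [hEs]
        nlinarith [mul_nonneg hV0 hK0]
    have hEnn : ∀ t, 0 ≤ Efn t := fun t => le_trans hQ0 (hEQ t)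
    -- word-entry facts
    have hOKmem : ∀ {c : ℕ}, c ∈ indexSet k β → c ∈ Icc 1 k := fun hc =>
      (Finset.mem_filter.mp hc).1
    -- value bound for admissible words
    have hvalV : ∀ (w : List ℕ), (∀ c ∈ w, c ∈ indexSet k β) → w.length ≤ η →
        ∀ n, valW β den n w ≤ V := by
      intro w hOK hlen n
      have h1 : valW β den n w ≤ W ^ w.length :=
        valW_le hβ hd hdenge (fun c hc => hble c (hOKmem (hOK c hc))) n
      have h2 : W ^ w.length ≤ W ^ η := pow_le_pow_right₀ hW1 hlen
      rw [hV_def]; linarith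
    -- The main tree induction.
    have main : ∀ t : ℕ, ∀ w : List ℕ, w.length + t = η →
        (∀ c ∈ w, c ∈ indexSet k β) →
        (∀ N1 N2 : ℕ, 0 < N1 → N1 ≤ N2 → N2 ≤ w.length →
          (∑ m ∈ Finset.Ico (N1 - 1) N2, w.getD m 0) ∉ indexSet k B) →
        ∀ n : ℕ, k * η + k ≤ n → valW β den n w * x (n - w.sum) ≤ Efn t := by
      intro t
      induction t with
      | zero =>
        intro w hlen hOK hbad n _
        exfalso
        have hwη : w.length = η := by omega
        set c : ℕ → ℕ := fun m => w.getD (m - 1) i0 with hc_def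
        have hc : ∀ m, 1 ≤ m → c m ∈ indexSet k β := by
          intro m _
          by_cases h : m - 1 < w.length
          · have : c m = w.get ⟨m - 1, h⟩ := List.getD_eq_getElem w i0 h
            rw [this]
            exact hOK _ (List.get_mem w ⟨m - 1, h⟩)
          · have : c m = i0 := List.getD_eq_default w i0 (by omega)
            rw [this]; exact hi0
        obtain ⟨N1, N2, hN1, hN12, hN2, hmem⟩ := hIter c hc
        refine hbad N1 N2 hN1 hN12 (by omega) ?_
        have heq : ∑ m ∈ Finset.Icc N1 N2, c m =
            ∑ m ∈ Finset.Ico (N1 - 1) N2, w.getD m 0 := by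
          rw [sum_Icc_shift c N1 N2 hN1]
          refine Finset.sum_congr rfl fun m hm => ?_
          have hmlt : m < w.length := by
            have := (Finset.mem_Ico.mp hm).2; omega
          rw [hc_def]
          simp only [Nat.add_sub_cancel]
          rw [List.getD_eq_getElem w i0 hmlt, List.getD_eq_getElem w 0 hmlt]
        rwa [heq] at hmem
      | succ t ih =>
        intro w hlen hOK hbad n hn
        have hwk : ∀ c ∈ w, c ≤ k := fun c hc =>
          (Finset.mem_Icc.mp (hOKmem (hOK c hc))).2
        have hsum_le : w.sum ≤ k * η := by
          have h1 : w.sum ≤ w.length * k := by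
            have := List.sum_le_card_nsmul w k hwk
            simpa [smul_eq_mul] using this
          have h2 : w.length * k ≤ η * k := Nat.mul_le_mul_right k (by omega)
          calc w.sum ≤ w.length * k := h1
            _ ≤ η * k := h2
            _ = k * η := Nat.mul_comm η k
        have hmk : k ≤ n - w.sum := by omega
        have hmval : n - w.sum - 0 = n - w.sum := rfl
        have hst := hstep (n - w.sum) hmk
        have hv0 : 0 ≤ valW β den n w := valW_nonneg hβ hdenpos n w
        have hVw : valW β den n w ≤ V := hvalV w hOK (by omega) n
        have h3 : ∀ i ∈ Icc 1 k,
            valW β den n w * ((β i * x (n - w.sum - i)) / den (n - w.sum)) ≤ Efn t := by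
          intro i hi
          by_cases hβi : 0 < β i
          · have hiIβ : i ∈ indexSet k β := Finset.mem_filter.mpr ⟨hi, hβi⟩
            have hterm_eq : valW β den n w * ((β i * x (n - w.sum - i)) / den (n - w.sum)) =
                valW β den n (w ++ [i]) * x (n - (w ++ [i]).sum) := by
              rw [valW_append, valW_cons, valW_nil, mul_one, List.sum_append, List.sum_cons,
                List.sum_nil, add_zero, Nat.sub_sub]
              ring
            rw [hterm_eq]
            have hOK' : ∀ c ∈ w ++ [i], c ∈ indexSet k β := by
              intro c hc
              rcases List.mem_append.mp hc with h' | h'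
              · exact hOK c h'
              · rw [List.mem_singleton.mp h']; exact hiIβ
            by_cases hbad' : ∀ N1 N2 : ℕ, 0 < N1 → N1 ≤ N2 → N2 ≤ (w ++ [i]).length →
                (∑ m ∈ Finset.Ico (N1 - 1) N2, (w ++ [i]).getD m 0) ∉ indexSet k B
            · refine ih (w ++ [i]) ?_ hOK' hbad' n hn
              simp only [List.length_append, List.length_cons, List.length_nil]
              omega
            · push_neg at hbad'
              obtain ⟨N1, N2, hN1, hN12, hN2len, hmemB⟩ := hbad'
              have hwlen' : (w ++ [i]).length = w.length + 1 := by simp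
              rw [hwlen'] at hN2len
              have hN2 : N2 = w.length + 1 := by
                by_contra hne
                have hN2le : N2 ≤ w.length := by omega
                have heq : ∑ m ∈ Finset.Ico (N1 - 1) N2, (w ++ [i]).getD m 0 =
                    ∑ m ∈ Finset.Ico (N1 - 1) N2, w.getD m 0 :=
                  Finset.sum_congr rfl fun m hm =>
                    List.getD_append _ _ _ _ (lt_of_lt_of_le (Finset.mem_Ico.mp hm).2 hN2le)
                exact hbad N1 N2 hN1 hN12 hN2le (heq ▸ hmemB)
              set u := (w ++ [i]).take (N1 - 1) with hu_def
              set v := (w ++ [i]).drop (N1 - 1) with hv_def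
              have huv : u ++ v = w ++ [i] := List.take_append_drop _ _
              have hvlen : v.length = w.length + 1 - (N1 - 1) := by
                rw [hv_def, List.length_drop, hwlen']
              have hvne : v ≠ [] := by
                intro h
                rw [h] at hvlen
                simp only [List.length_nil] at hvlen
                omega
              obtain ⟨cv, v', hv⟩ := List.exists_cons_of_ne_nil hvne
              have hjsum : v.sum = ∑ m ∈ Finset.Ico (N1 - 1) N2, (w ++ [i]).getD m 0 := by
                rw [hN2, ← hwlen']
                exact (sum_Ico_getD (w ++ [i]) (N1 - 1)).symm
              have hjB : v.sum ∈ indexSet k B := by rw [hjsum]; exact hmemB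
              have hjIcc : v.sum ∈ Icc 1 k := (Finset.mem_filter.mp hjB).1
              have hdenBX : B v.sum * x (n - (w ++ [i]).sum) ≤ den (n - u.sum) := by
                have hidx : n - u.sum - v.sum = n - (w ++ [i]).sum := by
                  rw [Nat.sub_sub, ← List.sum_append, huv]
                have h1 : B v.sum * x ((n - u.sum) - v.sum) ≤
                    ∑ j ∈ Icc 1 k, B j * x ((n - u.sum) - j) :=
                  Finset.single_le_sum (fun j _ => mul_nonneg (hB j) (hxnn _)) hjIcc
                have h2 : (0:ℝ) ≤ ∑ j ∈ Icc 1 k, C j * y ((n - u.sum) - j) :=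
                  Finset.sum_nonneg fun j _ => mul_nonneg (hC j) (hynn _)
                rw [hden_eq (n - u.sum)]
                rw [hidx] at h1
                linarith
              set X := x (n - (w ++ [i]).sum) with hX_def
              have hX0 : 0 ≤ X := hxnn _
              rcases eq_or_lt_of_le hX0 with hX | hX
              · rw [← hX, mul_zero]; exact hEnn t
              · have hsplit : valW β den n (w ++ [i]) =
                    valW β den n u * ((β cv / den (n - u.sum)) *
                      valW β den (n - u.sum - cv) v') := by
                  rw [← huv, valW_append, hv, valW_cons]
                have hu_lenle : u.length ≤ η := by
                  have h1 : u.length = min (N1 - 1) (w.length + 1) := by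
                    rw [hu_def, List.length_take, hwlen']
                  omega
                have huOK : ∀ c ∈ u, c ∈ indexSet k β := fun c hc =>
                  hOK' c (by rw [← huv]; exact List.mem_append_left _ hc)
                have hu_le : valW β den n u ≤ V := hvalV u huOK hu_lenle n
                have hv'OK : ∀ c ∈ v', c ∈ indexSet k β := fun c hc =>
                  hOK' c (by
                    rw [← huv, hv]
                    exact List.mem_append_right _ (List.mem_cons_of_mem _ hc))
                have hv'_lenle : v'.length ≤ η := by
                  have h1 : v.length = v'.length + 1 := by rw [hv, List.length_cons]
                  omega
                have hv'_le : valW β den (n - u.sum - cv) v' ≤ V := hvalV v' hv'OK hv'_lenle _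
                have hcvOK : cv ∈ indexSet k β :=
                  hOK' cv (by
                    rw [← huv, hv]
                    exact List.mem_append_right _ List.mem_cons_self)
                have hcvb : β cv ≤ b := hble cv (hOKmem hcvOK)
                have hBminX : 0 < Bmin * X := mul_pos hBminpos hX
                have hq2 : Bmin * X ≤ den (n - u.sum) := by
                  have h1 : Bmin * X ≤ B v.sum * X :=
                    mul_le_mul_of_nonneg_right (hBminle _ hjB) hX0
                  exact le_trans h1 hdenBX
                have hqb : β cv / den (n - u.sum) ≤ b / (Bmin * X) :=
                  div_le_div₀ hb0 hcvb hBminX hq2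
                have hq0 : 0 ≤ β cv / den (n - u.sum) := div_nonneg (hβ cv) (hdenpos _).le
                have hvw'0 : 0 ≤ valW β den (n - u.sum - cv) v' := valW_nonneg hβ hdenpos _ _
                have hbBm : 0 ≤ b / (Bmin * X) := div_nonneg hb0 hBminX.le
                have hchain : valW β den n (w ++ [i]) * X ≤ V * ((b / (Bmin * X)) * V) * X := by
                  rw [hsplit]
                  have hb1 : (β cv / den (n - u.sum)) * valW β den (n - u.sum - cv) v' ≤
                      (b / (Bmin * X)) * V :=
                    mul_le_mul hqb hv'_le hvw'0 hbBm
                  have hb2 : valW β den n u * ((β cv / den (n - u.sum)) *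
                      valW β den (n - u.sum - cv) v') ≤ V * ((b / (Bmin * X)) * V) :=
                    mul_le_mul hu_le hb1 (mul_nonneg hq0 hvw'0) hV0
                  exact mul_le_mul_of_nonneg_right hb2 hX0
                have hfin : V * ((b / (Bmin * X)) * V) * X = Q := by
                  rw [hQ_def]
                  field_simp
                calc valW β den n (w ++ [i]) * X
                    ≤ V * ((b / (Bmin * X)) * V) * X := hchain
                  _ = Q := hfin
                  _ ≤ Efn t := hEQ t
          · have : β i = 0 := le_antisymm (not_lt.mp hβi) (hβ i)
            rw [this]
            simpa using hEnn t
        calc valW β den n w * x (n - w.sum)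
            ≤ valW β den n w * (K + ∑ i ∈ Icc 1 k, (β i * x (n - w.sum - i)) / den (n - w.sum)) :=
              mul_le_mul_of_nonneg_left hst hv0
          _ = valW β den n w * K +
              ∑ i ∈ Icc 1 k, valW β den n w * ((β i * x (n - w.sum - i)) / den (n - w.sum)) := by
              rw [mul_add, Finset.mul_sum]
          _ ≤ V * K + ∑ i ∈ Icc 1 k, Efn t :=
              add_le_add (mul_le_mul_of_nonneg_right hVw hK0) (Finset.sum_le_sum h3)
          _ = V * K + (k : ℝ) * Efn t := by
              rw [Finset.sum_const, Nat.card_Icc]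
              simp [nsmul_eq_mul]
          _ = Efn (t + 1) := (hEs t).symm
    -- conclude
    have hbase_bad : ∀ N1 N2 : ℕ, 0 < N1 → N1 ≤ N2 → N2 ≤ ([] : List ℕ).length →
        (∑ m ∈ Finset.Ico (N1 - 1) N2, ([] : List ℕ).getD m 0) ∉ indexSet k B := by
      intro N1 N2 h1 h2 h3
      simp only [List.length_nil] at h3
      omega
    refine ⟨Efn η + 1, by linarith [hEnn η], k * η + k, ?_⟩
    intro n hn
    have h := main η [] (by simp) (by simp) hbase_bad n (by omega)
    simp only [valW_nil, List.sum_nil, Nat.sub_zero, one_mul] at h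
    linarith
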